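/- The utilitarian-welfare-maximizing mechanism with the cyclic-style tie-breaking (ties go to the smallest-index agent, except ties exactly between agents 1 and n go to agent n) satisfies, for n ≥ 3 agents with normalized additive valuations: for every agent i and every report b_i, the worst-case (over others' reports) utility of agent i equals 0. In particular, for every report there exist reports of the other agents under which agent i receives no item. -/

import Mathlib

noncomputable section
open scoped Classical
open Finset

/-- The winner of item `j` under the utilitarian mechanism with the cyclic-style
tie-breaking: among the set `T` of agents with maximal bid on `j`, the item goes
to the smallest-index agent, except when `T` is exactly `{agent 0, agent n-1}`,
in which case it goes to agent `n-1`. -/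
def uwinner (n m : ℕ) (b : Fin n → Fin m → ℝ) (j : Fin m) : Option (Fin n) :=
  let T := Finset.univ.filter (fun a => ∀ a', b a' j ≤ b a j)
  if T.image Fin.val = ({0, n - 1} : Finset ℕ) then T.max else T.min

lemma uwinner_ne_of_not_mem {n m : ℕ} {b : Fin n → Fin m → ℝ} {j : Fin m} {i : Fin n}
    (hi : i ∉ Finset.univ.filter (fun a => ∀ a', b a' j ≤ b a j)) :
    uwinner n m b j ≠ some i := by
  unfold uwinner
  set T := Finset.univ.filter (fun a => ∀ a', b a' j ≤ b a j) with hT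
  by_cases h : T.image Fin.val = ({0, n - 1} : Finset ℕ)
  · simp only [h, if_pos]
    intro hmax; exact hi (Finset.mem_of_max hmax)
  · simp only [h, if_neg, if_false]
    intro hmin; exact hi (Finset.mem_of_min hmin)


/-- for `n ≥ 3` agents and at least two items, under the
utilitarian-welfare-maximizing mechanism with the above tie-breaking, for every
agent `i` and every normalized report `bi` there exist normalized reports of the
other agents under which agent `i` receives no item at all; hence (the true
valuation being nonnegative) her worst-case utility equals `0`. -/
theorem stmt7 (n m : ℕ) (hn : 3 ≤ n) (hm : 2 ≤ m)
    (i : Fin n) (bi : Fin m → ℝ) (hbi : (∀ j, 0 ≤ bi j) ∧ ∑ j, bi j = 1) :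
    ∃ b : Fin n → Fin m → ℝ,
      (∀ a, (∀ j, 0 ≤ b a j) ∧ ∑ j, b a j = 1) ∧
      b i = bi ∧
      (∀ j : Fin m, uwinner n m b j ≠ some i) ∧
      (∀ v : Fin m → ℝ, (∀ j, 0 ≤ v j) →
        ∑ j ∈ Finset.univ.filter (fun j => uwinner n m b j = some i), v j = 0) := by
  obtain ⟨hpos, hsum⟩ := hbi
  have hm1 : (0:ℝ) < (m:ℝ) - 1 := by
    have : (2:ℝ) ≤ (m:ℝ) := by exact_mod_cast hm
    linarith
  -- it suffices to produce b with the first three properties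
  suffices h : ∃ b : Fin n → Fin m → ℝ,
      (∀ a, (∀ j, 0 ≤ b a j) ∧ ∑ j, b a j = 1) ∧
      b i = bi ∧ (∀ j : Fin m, uwinner n m b j ≠ some i) by
    obtain ⟨b, h1, h2, h3⟩ := h
    refine ⟨b, h1, h2, h3, ?_⟩
    intro v _
    rw [Finset.filter_false_of_mem (fun j _ => h3 j), Finset.sum_empty]
  by_cases hi0 : i.val = 0
  · -- agent 0
    by_cases hA : ∃ j0, bi j0 = 1
    · -- indicator report: tie with agent n-1, uniform middle agents
      obtain ⟨j0, hj0⟩ := hA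
      have hzero : ∀ j, j ≠ j0 → bi j = 0 := by
        intro j hj
        have hh := (Finset.add_sum_erase Finset.univ bi (Finset.mem_univ j0)).symm
        rw [hsum, hj0] at hh
        have h1 : ∑ k ∈ Finset.univ.erase j0, bi k = 0 := by linarith
        exact Finset.sum_eq_zero_iff_of_nonneg (fun k _ => hpos k) |>.mp h1 j
          (Finset.mem_erase.mpr ⟨hj, Finset.mem_univ j⟩)
      set u : Fin m → ℝ := fun j => if j = j0 then 0 else ((m:ℝ)-1)⁻¹ with hu
      set b : Fin n → Fin m → ℝ :=
        fun a => if a.val = 0 ∨ a.val = n - 1 then bi else u with hb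
      have husum : ∑ j, u j = 1 := by
        have huu : ∀ j, u j = ((m:ℝ)-1)⁻¹ - (if j = j0 then ((m:ℝ)-1)⁻¹ else 0) := by
          intro j; rw [hu]; dsimp only; split_ifs <;> ring
        rw [Finset.sum_congr rfl (fun j _ => huu j), Finset.sum_sub_distrib,
          Finset.sum_const, Finset.sum_ite_eq' Finset.univ j0, if_pos (Finset.mem_univ j0),
          Finset.card_univ, Fintype.card_fin, nsmul_eq_mul]
        field_simp
      refine ⟨b, ?_, ?_, ?_⟩
      · intro a
        by_cases h : a.val = 0 ∨ a.val = n - 1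
        · rw [hb]; dsimp only; rw [if_pos h]; exact ⟨hpos, hsum⟩
        · rw [hb]; dsimp only; rw [if_neg h]
          refine ⟨fun j => ?_, husum⟩
          rw [hu]; dsimp only; split_ifs
          · exact le_refl 0
          · positivity
      · rw [hb]; dsimp only; rw [if_pos (Or.inl hi0)]
      · intro j
        by_cases hj : j = j0
        · subst hj
          unfold uwinner
          set T := Finset.univ.filter (fun a => ∀ a', b a' j ≤ b a j) with hT
          have hbj : ∀ a : Fin n, b a j = if a.val = 0 ∨ a.val = n - 1 then 1 else 0 := by
            intro a
            by_cases h : a.val = 0 ∨ a.val = n - 1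
            · simp only [hb, h, if_pos, hj0]
            · simp only [hb]; rw [if_neg h, if_neg h, hu]; dsimp only; rw [if_pos rfl]
          have hTeq : T = {⟨0, by omega⟩, ⟨n-1, by omega⟩} := by
            ext a
            simp only [hT, Finset.mem_filter, Finset.mem_univ, true_and, Finset.mem_insert,
              Finset.mem_singleton]
            constructor
            · intro h
              have h0 := h ⟨0, by omega⟩
              have e0 : b ⟨0, by omega⟩ j = 1 := by rw [hbj]; norm_num
              rw [e0, hbj] at h0
              by_cases hc : a.val = 0 ∨ a.val = n - 1
              · rcases hc with hc | hc
                · left; exact Fin.ext hc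
                · right; exact Fin.ext hc
              · rw [if_neg hc] at h0; linarith
            · intro h
              intro a'
              rw [hbj, hbj]
              have : a.val = 0 ∨ a.val = n - 1 := by
                rcases h with h | h <;> subst h <;> simp
              rw [if_pos this]
              split_ifs <;> norm_num
          have hcond : T.image Fin.val = ({0, n - 1} : Finset ℕ) := by
            rw [hTeq]; simp
          simp only [hcond, if_pos, ↓reduceIte]
          intro hmax
          have hlast : (⟨n-1, by omega⟩ : Fin n) ∈ T := by rw [hTeq]; simp
          have hle := Finset.le_max hlast
          rw [hmax] at hle
          have h2 := WithBot.coe_le_coe.mp hle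
          have h3 : n - 1 ≤ i.val := h2
          omega
        · apply uwinner_ne_of_not_mem
          simp only [Finset.mem_filter, Finset.mem_univ, true_and, not_forall]
          refine ⟨⟨1, by omega⟩, ?_⟩
          have hne : ¬((1:ℕ) = 0 ∨ (1:ℕ) = n - 1) := by omega
          have h1 : b ⟨1, by omega⟩ j = ((m:ℝ)-1)⁻¹ := by
            show (if (1:ℕ) = 0 ∨ (1:ℕ) = n - 1 then bi else u) j = _
            rw [if_neg hne, hu]
            exact if_neg hj
          have h0 : b i j = 0 := by
            show (if i.val = 0 ∨ i.val = n - 1 then bi else u) j = 0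
            rw [if_pos (Or.inl hi0)]
            exact hzero j hj
          rw [h1, h0]
          push_neg
          positivity
    · -- all bids < 1
      push_neg at hA
      have hlt1 : ∀ j, bi j < 1 := by
        intro j
        have hle : bi j ≤ 1 := by
          calc bi j ≤ ∑ k, bi k := Finset.single_le_sum (fun k _ => hpos k) (Finset.mem_univ j)
          _ = 1 := hsum
        exact lt_of_le_of_ne hle (hA j)
      have hex : ∃ j0, 0 < bi j0 := by
        by_contra hc
        push_neg at hc
        have : ∑ j, bi j = 0 := Finset.sum_eq_zero (fun j _ => le_antisymm (hc j) (hpos j))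
        rw [hsum] at this; norm_num at this
      obtain ⟨j0, ht0⟩ := hex
      set t : ℝ := bi j0 with htdef
      have ht1 : t < 1 := hlt1 j0
      have h1t : (0:ℝ) < 1 - t := by linarith
      set ind : Fin m → ℝ := fun j => if j = j0 then 1 else 0 with hind
      set e : Fin m → ℝ := fun j => if j = j0 then 0 else
          (1 - t/2) * (bi j / (1 - t)) + (t/2) * ((m:ℝ)-1)⁻¹ with he
      set b : Fin n → Fin m → ℝ :=
        fun a => if a.val = 0 then bi else if a.val = 2 then e else ind with hb
      have hindsum : ∑ j, ind j = 1 := by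
        rw [hind]
        rw [Finset.sum_ite_eq' Finset.univ j0 (fun _ => (1:ℝ))]
        exact if_pos (Finset.mem_univ j0)
      have hindpos : ∀ j, 0 ≤ ind j := by
        intro j; rw [hind]; dsimp only; split_ifs <;> norm_num
      have hepos : ∀ j, 0 ≤ e j := by
        intro j; rw [he]; dsimp only; split_ifs with h
        · exact le_refl 0
        · have h1 : 0 ≤ (1 - t/2) * (bi j / (1 - t)) := by
            apply mul_nonneg (by linarith) (div_nonneg (hpos j) (by linarith))
          have h2 : 0 ≤ (t/2) * ((m:ℝ)-1)⁻¹ := by positivity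
          linarith
      have hesum : ∑ j, e j = 1 := by
        have hee : ∀ j, e j = (1 - t/2)/(1-t) * bi j + (t/2) * ((m:ℝ)-1)⁻¹ -
            (if j = j0 then (1 - t/2)/(1-t) * bi j0 + (t/2) * ((m:ℝ)-1)⁻¹ else 0) := by
          intro j; rw [he]; dsimp only; split_ifs with h
          · subst h; ring
          · ring
        rw [Finset.sum_congr rfl (fun j _ => hee j), Finset.sum_sub_distrib,
          Finset.sum_add_distrib, ← Finset.mul_sum, hsum,
          Finset.sum_ite_eq' Finset.univ j0, if_pos (Finset.mem_univ j0),
          Finset.sum_const, Finset.card_univ, Fintype.card_fin, nsmul_eq_mul]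
        rw [← htdef]
        field_simp
        ring
      refine ⟨b, ?_, ?_, ?_⟩
      · intro a
        rw [hb]; dsimp only
        split_ifs
        · exact ⟨hpos, hsum⟩
        · exact ⟨hepos, hesum⟩
        · exact ⟨hindpos, hindsum⟩
      · rw [hb]; dsimp only; rw [if_pos hi0]
      · intro j
        apply uwinner_ne_of_not_mem
        simp only [Finset.mem_filter, Finset.mem_univ, true_and, not_forall]
        have hbival : b i j = bi j := by
          show (if i.val = 0 then bi else if i.val = 2 then e else ind) j = bi j
          rw [if_pos hi0]
        by_cases hj : j = j0
        · refine ⟨⟨1, by omega⟩, ?_⟩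
          have h1 : b ⟨1, by omega⟩ j = 1 := by
            show (if (1:ℕ) = 0 then bi else if (1:ℕ) = 2 then e else ind) j = 1
            norm_num [hind, hj]
          rw [h1, hbival, hj]
          push_neg
          exact ht1
        · refine ⟨⟨2, by omega⟩, ?_⟩
          have h2 : b ⟨2, by omega⟩ j =
              (1 - t/2) * (bi j / (1 - t)) + (t/2) * ((m:ℝ)-1)⁻¹ := by
            show (if (2:ℕ) = 0 then bi else if (2:ℕ) = 2 then e else ind) j = _
            norm_num [he, hj]
          rw [h2, hbival]
          push_neg
          have hd : bi j / (1-t) * (1-t) = bi j := div_mul_cancel₀ _ (ne_of_gt h1t)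
          have hdn : 0 ≤ bi j / (1-t) := div_nonneg (hpos j) (le_of_lt h1t)
          have hc : 0 < (t/2) * ((m:ℝ)-1)⁻¹ := by positivity
          nlinarith [hc, mul_nonneg hdn (le_of_lt ht0), hd]
  · -- agent i ≠ 0: everyone reports bi, agent 0 wins everything
    refine ⟨fun _ => bi, fun a => ⟨hpos, hsum⟩, rfl, ?_⟩
    intro j
    unfold uwinner
    set T := Finset.univ.filter
      (fun a => ∀ a', (fun (_ : Fin n) => bi) a' j ≤ (fun (_ : Fin n) => bi) a j) with hT
    have hTuniv : T = Finset.univ := by ext a; simp [hT]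
    have hcond : ¬ (T.image Fin.val = ({0, n - 1} : Finset ℕ)) := by
      intro h
      have h1 : (1 : ℕ) ∈ T.image Fin.val := by
        rw [hTuniv]
        exact Finset.mem_image.mpr ⟨⟨1, by omega⟩, Finset.mem_univ _, rfl⟩
      rw [h] at h1
      simp at h1
      omega
    simp only [hcond, if_neg, if_false, ↓reduceIte]
    intro hmin
    have h0 : (⟨0, by omega⟩ : Fin n) ∈ T := by rw [hTuniv]; exact Finset.mem_univ _
    have hle := Finset.min_le h0
    rw [hmin] at hle
    have h2 := WithTop.coe_le_coe.mp hle
    have h3 : i.val ≤ 0 := h2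
    omega
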